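/- Under uniform stability with constant c_n and the bi-Lipschitz parametrization with constants κ₁ > 0 and κ₂ < ∞, for every ε > 0, P( ‖μ_{β̂ₙ} − μ_{β̄ₙ}‖_∞ ≥ ε ) ≤ 2p·exp( −2κ₁²ε² / (n κ₂² c_n²) ). -/

import Mathlib

open MeasureTheory ProbabilityTheory BoundedContinuousFunction

lemma hoeffding_aux (p : ℝ) (hp0 : 0 ≤ p) (hp1 : p ≤ 1) (h : ℝ) :
    (1 - p + p * Real.exp h) * Real.exp (-(p * h)) ≤ Real.exp (h ^ 2 / 8) := by
  set φ : ℝ → ℝ := fun x => 1 - p + p * Real.exp x with hφdef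
  have hφpos : ∀ x, 0 < φ x := by
    intro x
    have := Real.exp_pos x
    rcases eq_or_lt_of_le hp0 with h0 | h0
    · simp [hφdef, ← h0]
    · have : 0 < p * Real.exp x := by positivity
      have : 0 ≤ 1 - p := by linarith
      simp only [hφdef]; linarith
  have hφ' : ∀ x, HasDerivAt φ (p * Real.exp x) x := by
    intro x
    exact ((Real.hasDerivAt_exp x).const_mul p).const_add (1 - p)
  set g : ℝ → ℝ := fun x => x ^ 2 / 8 - (Real.log (φ x) - p * x) with hgdef
  set g₁ : ℝ → ℝ := fun x => x / 4 - (p * Real.exp x / φ x - p) with hg₁def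
  have hg' : ∀ x, HasDerivAt g (g₁ x) x := by
    intro x
    have h1 : HasDerivAt (fun x : ℝ => Real.log (φ x)) (p * Real.exp x / φ x) x :=
      (hφ' x).log (hφpos x).ne'
    have h2 : HasDerivAt (fun x : ℝ => x ^ 2 / 8) (x / 4) x := by
      have := (hasDerivAt_pow 2 x).div_const 8
      exact this.congr_deriv (by norm_num; ring)
    have h3 : HasDerivAt (fun x : ℝ => p * x) p x := by
      simpa using (hasDerivAt_id x).const_mul p
    exact h2.sub (h1.sub h3)
  set g₂ : ℝ → ℝ := fun x =>
    1 / 4 - (p * Real.exp x * φ x - p * Real.exp x * (p * Real.exp x)) / (φ x) ^ 2 with hg₂def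
  have hg₁' : ∀ x, HasDerivAt g₁ (g₂ x) x := by
    intro x
    have h1 : HasDerivAt (fun x : ℝ => p * Real.exp x) (p * Real.exp x) x :=
      (Real.hasDerivAt_exp x).const_mul p
    have h2 : HasDerivAt (fun x : ℝ => p * Real.exp x / φ x)
        ((p * Real.exp x * φ x - p * Real.exp x * (p * Real.exp x)) / (φ x) ^ 2) x :=
      h1.div (hφ' x) (hφpos x).ne'
    have h3 : HasDerivAt (fun x : ℝ => x / 4) (1 / 4) x := by
      simpa using (hasDerivAt_id x).div_const 4
    exact (h3.sub (h2.sub (hasDerivAt_const x p))).congr_deriv (by simp [hg₂def])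
  have hg₂nonneg : ∀ x, 0 ≤ g₂ x := by
    intro x
    have hφx := hφpos x
    have hgen : ∀ F e : ℝ, 0 < F → (p * e * F - p * e * (p * e)) / F ^ 2 ≤ 1 / 4 := by
      intro F e hF
      rw [div_le_iff₀ (by positivity)]
      nlinarith [sq_nonneg (F - 2 * (p * e))]
    have hkey : (p * Real.exp x * φ x - p * Real.exp x * (p * Real.exp x)) / (φ x) ^ 2
        ≤ 1 / 4 := hgen (φ x) (Real.exp x) hφx
    simp only [hg₂def]; linarith
  have hg₁mono : Monotone g₁ := by
    have hdiff : Differentiable ℝ g₁ := fun x => (hg₁' x).differentiableAt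
    exact monotone_of_deriv_nonneg hdiff (fun x => by rw [(hg₁' x).deriv]; exact hg₂nonneg x)
  have hg₁zero : g₁ 0 = 0 := by
    simp [hg₁def, hφdef]
  have hgzero : g 0 = 0 := by
    simp [hgdef, hφdef]
  have hgnonneg : ∀ x, 0 ≤ g x := by
    intro x
    have hdiffg : Differentiable ℝ g := fun y => (hg' y).differentiableAt
    rcases le_total 0 x with hx | hx
    · have hmono : MonotoneOn g (Set.Ici 0) := by
        apply monotoneOn_of_deriv_nonneg (convex_Ici 0) hdiffg.continuous.continuousOn
          hdiffg.differentiableOn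
        intro y hy
        rw [(hg' y).deriv]
        rw [interior_Ici] at hy
        have : (0:ℝ) ≤ y := le_of_lt hy
        calc (0:ℝ) = g₁ 0 := hg₁zero.symm
          _ ≤ g₁ y := hg₁mono this
      have := hmono (Set.self_mem_Ici) (Set.mem_Ici.mpr hx) hx
      linarith [hgzero ▸ this]
    · have hanti : AntitoneOn g (Set.Iic 0) := by
        apply antitoneOn_of_deriv_nonpos (convex_Iic 0) hdiffg.continuous.continuousOn
          hdiffg.differentiableOn
        intro y hy
        rw [(hg' y).deriv]
        rw [interior_Iic] at hy
        calc g₁ y ≤ g₁ 0 := hg₁mono (le_of_lt hy)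
          _ = 0 := hg₁zero
      have := hanti (Set.mem_Iic.mpr hx) (Set.self_mem_Iic) hx
      linarith [hgzero ▸ this]
  have key : Real.log (φ h) - p * h ≤ h ^ 2 / 8 := by
    have := hgnonneg h; simp only [hgdef] at this; linarith
  calc (1 - p + p * Real.exp h) * Real.exp (-(p * h))
      = Real.exp (Real.log (φ h) - p * h) := by
        rw [Real.exp_sub, Real.exp_log (hφpos h)]
        simp [hφdef, div_eq_mul_inv, Real.exp_neg]
    _ ≤ Real.exp (h ^ 2 / 8) := Real.exp_le_exp.mpr key

lemma integrable_of_bounded' {α : Type*} [MeasurableSpace α] {m : Measure α}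
    [IsFiniteMeasure m] {f : α → ℝ} (hf : Measurable f) (C : ℝ) (hC : ∀ x, |f x| ≤ C) :
    Integrable f m :=
  (integrable_const C).mono' hf.aestronglyMeasurable (ae_of_all _ fun x => by
    simpa [Real.norm_eq_abs] using hC x)

lemma hoeffding_lemma {α : Type*} [MeasurableSpace α] (m : Measure α) [IsProbabilityMeasure m]
    (f : α → ℝ) (hf : Measurable f) (a d : ℝ) (hd : 0 ≤ d)
    (hIcc : ∀ x, f x ∈ Set.Icc a (a + d)) (hmean : ∫ x, f x ∂m = 0) (t : ℝ) :
    ∫ x, Real.exp (t * f x) ∂m ≤ Real.exp (t ^ 2 * d ^ 2 / 8) := by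
  have hfint : Integrable f m := integrable_of_bounded' hf (|a| + d) (fun x => by
    have h1 := (hIcc x).1; have h2 := (hIcc x).2
    rw [abs_le]; constructor <;> [nlinarith [neg_abs_le a, le_abs_self a];
      nlinarith [neg_abs_le a, le_abs_self a]])
  have ha0 : a ≤ 0 := by
    have : ∫ _ : α, a ∂m ≤ ∫ x, f x ∂m :=
      integral_mono (integrable_const a) hfint (fun x => (hIcc x).1)
    simpa [hmean] using this
  have had0 : 0 ≤ a + d := by
    have : ∫ x, f x ∂m ≤ ∫ _ : α, (a + d) ∂m :=
      integral_mono hfint (integrable_const (a + d)) (fun x => (hIcc x).2)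
    simpa [hmean] using this
  rcases eq_or_lt_of_le hd with hd0 | hd0
  · -- d = 0 case
    have ha : a = 0 := le_antisymm ha0 (by linarith)
    have hfx : ∀ x, f x = 0 := fun x => le_antisymm (by have := (hIcc x).2; rw [ha, ← hd0] at this; simpa using this)
      (by have := (hIcc x).1; rw [ha] at this; exact this)
    simp only [hfx, mul_zero, Real.exp_zero, integral_const, measure_univ, ENNReal.toReal_one, probReal_univ,
      smul_eq_mul, one_mul]
    exact Real.one_le_exp (by positivity)
  · -- d > 0
    set p : ℝ := -a / d with hpdef
    have hp0 : 0 ≤ p := by apply div_nonneg <;> linarith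
    have hp1 : p ≤ 1 := by rw [div_le_one hd0]; linarith
    -- pointwise convexity bound
    have hconv : ∀ x, Real.exp (t * f x)
        ≤ ((a + d - f x) * Real.exp (t * a) + (f x - a) * Real.exp (t * (a + d))) / d := by
      intro x
      have h1 := (hIcc x).1; have h2 := (hIcc x).2
      set θ : ℝ := (a + d - f x) / d with hθdef
      have hθ0 : 0 ≤ θ := by apply div_nonneg <;> linarith
      have hθ1 : 0 ≤ 1 - θ := by
        have : θ ≤ 1 := by rw [div_le_one hd0]; linarith
        linarith
      have hsum : θ + (1 - θ) = 1 := by ring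
      have hcomb : θ * (t * a) + (1 - θ) * (t * (a + d)) = t * f x := by
        rw [hθdef]; field_simp; ring
      have := convexOn_exp.2 (Set.mem_univ (t * a)) (Set.mem_univ (t * (a + d)))
        hθ0 hθ1 hsum
      rw [smul_eq_mul, smul_eq_mul, smul_eq_mul, smul_eq_mul, hcomb] at this
      calc Real.exp (t * f x) ≤ θ * Real.exp (t * a) + (1 - θ) * Real.exp (t * (a + d)) := this
        _ = ((a + d - f x) * Real.exp (t * a) + (f x - a) * Real.exp (t * (a + d))) / d := by
            rw [hθdef]; field_simp; ring
    have hexpint : Integrable (fun x => Real.exp (t * f x)) m := by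
      apply integrable_of_bounded' (by fun_prop) (Real.exp (|t| * (|a| + d)))
      intro x
      rw [abs_of_pos (Real.exp_pos _)]
      apply Real.exp_le_exp.mpr
      calc t * f x ≤ |t * f x| := le_abs_self _
        _ = |t| * |f x| := abs_mul t (f x)
        _ ≤ |t| * (|a| + d) := by
            apply mul_le_mul_of_nonneg_left _ (abs_nonneg t)
            have h1 := (hIcc x).1; have h2 := (hIcc x).2
            rw [abs_le]; constructor <;> nlinarith [neg_abs_le a, le_abs_self a]
    have hRHSint : Integrable
        (fun x => ((a + d - f x) * Real.exp (t * a) + (f x - a) * Real.exp (t * (a + d))) / d)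
        m := by
      apply Integrable.div_const
      exact (((integrable_const (a+d)).sub hfint).mul_const _).add
        ((hfint.sub (integrable_const a)).mul_const _)
    have hstep1 : ∫ x, Real.exp (t * f x) ∂m
        ≤ ((a + d) * Real.exp (t * a) - a * Real.exp (t * (a + d))) / d := by
      calc ∫ x, Real.exp (t * f x) ∂m
          ≤ ∫ x, ((a + d - f x) * Real.exp (t * a) + (f x - a) * Real.exp (t * (a + d))) / d ∂m :=
            integral_mono hexpint hRHSint hconv
        _ = ((a + d) * Real.exp (t * a) - a * Real.exp (t * (a + d))) / d := by
            rw [integral_div]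
            congr 1
            have hrw : ∀ x, (a + d - f x) * Real.exp (t * a) + (f x - a) * Real.exp (t * (a + d))
                = ((a + d) * Real.exp (t * a) - a * Real.exp (t * (a + d)))
                  + f x * (Real.exp (t * (a + d)) - Real.exp (t * a)) := by intro x; ring
            simp_rw [hrw]
            rw [integral_add (integrable_const _) (hfint.mul_const _), integral_mul_const, hmean]
            simp
    have hstep2 : ((a + d) * Real.exp (t * a) - a * Real.exp (t * (a + d))) / d
        = (1 - p + p * Real.exp (t * d)) * Real.exp (-(p * (t * d))) := by
      have hsplit : Real.exp (t * (a + d)) = Real.exp (t * d) * Real.exp (t * a) := by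
        rw [← Real.exp_add]; ring_nf
      have hpe : -(p * (t * d)) = t * a := by
        rw [hpdef]; field_simp
      rw [hpe, hsplit, hpdef]
      field_simp
      ring
    have hstep3 := hoeffding_aux p hp0 hp1 (t * d)
    calc ∫ x, Real.exp (t * f x) ∂m
        ≤ (1 - p + p * Real.exp (t * d)) * Real.exp (-(p * (t * d))) := by
          rw [← hstep2]; exact hstep1
      _ ≤ Real.exp ((t * d) ^ 2 / 8) := hstep3
      _ = Real.exp (t ^ 2 * d ^ 2 / 8) := by rw [mul_pow]

lemma mcdiarmid_mgf {Z : Type*} [MeasurableSpace Z] (d : ℝ) (hd : 0 ≤ d) (B : ℝ) :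
    ∀ (n : ℕ) (ms : Fin n → Measure Z), (∀ i, IsProbabilityMeasure (ms i)) →
    ∀ (f : (Fin n → Z) → ℝ), Measurable f →
    (∀ (i : Fin n) (z z' : Fin n → Z), (∀ j, j ≠ i → z j = z' j) → |f z - f z'| ≤ d) →
    (∀ z, |f z| ≤ B) →
    ∀ t : ℝ,
    ∫ z, Real.exp (t * (f z - ∫ y, f y ∂(Measure.pi ms))) ∂(Measure.pi ms)
      ≤ Real.exp (t ^ 2 * n * d ^ 2 / 8) := by
  intro n
  induction n with
  | zero =>
    intro ms hms f hf hbd hB t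
    haveI := hms
    haveI : IsProbabilityMeasure (Measure.pi ms) := Measure.pi.instIsProbabilityMeasure ms
    have hconst : ∀ z : Fin 0 → Z, f z = f (fun i => i.elim0) := fun z =>
      congrArg f (funext fun i => i.elim0)
    simp only [hconst]
    simp
  | succ n ih =>
    intro ms hms f hf hbd hB t
    haveI := hms
    haveI : IsProbabilityMeasure (Measure.pi ms) := Measure.pi.instIsProbabilityMeasure ms
    set ms' : Fin n → Measure Z := fun j => ms ((0 : Fin (n + 1)).succAbove j) with hms'def
    haveI : ∀ j, IsProbabilityMeasure (ms' j) := fun j => hms _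
    haveI : IsProbabilityMeasure (Measure.pi ms') := Measure.pi.instIsProbabilityMeasure ms'
    haveI : IsProbabilityMeasure ((ms 0).prod (Measure.pi ms')) := by infer_instance
    set e := MeasurableEquiv.piFinSuccAbove (fun _ : Fin (n + 1) => Z) 0 with hedef
    have hmp : MeasurePreserving e (Measure.pi ms) ((ms 0).prod (Measure.pi ms')) :=
      measurePreserving_piFinSuccAbove ms 0
    set F : Z × (Fin n → Z) → ℝ := fun w => f (e.symm w) with hFdef
    have hFmeas : Measurable F := hf.comp e.symm.measurable
    have hFB : ∀ w, |F w| ≤ B := fun w => hB _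
    -- key coordinate facts
    have hsymm0 : ∀ (x : Z) (r : Fin n → Z), (e.symm (x, r)) 0 = x := by
      intro x r
      simp [hedef, MeasurableEquiv.piFinSuccAbove]
    have hsymmsucc : ∀ (x : Z) (r : Fin n → Z) (j : Fin n),
        (e.symm (x, r)) ((0 : Fin (n + 1)).succAbove j) = r j := by
      intro x r j
      simp [hedef, MeasurableEquiv.piFinSuccAbove]
    -- g
    set g : (Fin n → Z) → ℝ := fun r => ∫ x, F (x, r) ∂(ms 0) with hgdef
    have hgsm : StronglyMeasurable g :=
      hFmeas.stronglyMeasurable.integral_prod_left'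
    have hgmeas : Measurable g := hgsm.measurable
    have hFxint : ∀ r, Integrable (fun x => F (x, r)) (ms 0) := fun r =>
      integrable_of_bounded' (hFmeas.comp (measurable_prodMk_right)) B (fun x => hFB _)
    have hgB : ∀ r, |g r| ≤ B := by
      intro r
      have := norm_integral_le_of_norm_le_const (μ := ms 0)
        (f := fun x => F (x, r)) (C := B) (ae_of_all _ fun x => by
          simpa [Real.norm_eq_abs] using hFB (x, r))
      simpa [Real.norm_eq_abs, measure_univ] using this
    -- bounded differences of g
    have hgbd : ∀ (i : Fin n) (r r' : Fin n → Z), (∀ j, j ≠ i → r j = r' j) →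
        |g r - g r'| ≤ d := by
      intro i r r' hagree
      have hdiff : ∀ x : Z, |F (x, r) - F (x, r')| ≤ d := by
        intro x
        apply hbd ((0 : Fin (n + 1)).succAbove i)
        intro j hj
        induction j using Fin.cases with
        | zero => rw [hsymm0, hsymm0]
        | succ k =>
          rw [← Fin.zero_succAbove k, hsymmsucc, hsymmsucc]
          apply hagree
          intro hki
          apply hj
          subst hki
          rfl
      have : g r - g r' = ∫ x, (F (x, r) - F (x, r')) ∂(ms 0) := by
        rw [integral_sub (hFxint r) (hFxint r')]
      rw [this]
      have := norm_integral_le_of_norm_le_const (μ := ms 0)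
        (f := fun x => F (x, r) - F (x, r')) (C := d) (ae_of_all _ fun x => by
          simpa [Real.norm_eq_abs] using hdiff x)
      simpa [Real.norm_eq_abs, measure_univ] using this
    -- mean
    set M : ℝ := ∫ y, f y ∂(Measure.pi ms) with hMdef
    have hFint : Integrable F ((ms 0).prod (Measure.pi ms')) :=
      integrable_of_bounded' hFmeas B hFB
    have hMalt : M = ∫ w, F w ∂((ms 0).prod (Measure.pi ms')) := by
      rw [hMdef, ← hmp.integral_comp e.measurableEmbedding]
      congr 1
      funext z
      simp [hFdef]
    have hMg : M = ∫ r, g r ∂(Measure.pi ms') := by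
      rw [hMalt, integral_prod_symm F hFint]
    have hMB : |M| ≤ B := by
      rw [hMalt]
      have := norm_integral_le_of_norm_le_const (μ := (ms 0).prod (Measure.pi ms'))
        (f := F) (C := B) (ae_of_all _ fun w => by simpa [Real.norm_eq_abs] using hFB w)
      simpa [Real.norm_eq_abs, measure_univ] using this
    -- inner Hoeffding bound for fixed r
    have hZne : Nonempty Z := by
      haveI : NeZero (ms 0) := ⟨IsProbabilityMeasure.ne_zero (ms 0)⟩
      exact Measure.nonempty_of_neZero (ms 0)
    obtain ⟨x₀⟩ := hZne
    have hinner : ∀ r : Fin n → Z,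
        ∫ x, Real.exp (t * (F (x, r) - M)) ∂(ms 0)
          ≤ Real.exp (t ^ 2 * d ^ 2 / 8) * Real.exp (t * (g r - M)) := by
      intro r
      have hpair : ∀ x x' : Z, |F (x, r) - F (x', r)| ≤ d := by
        intro x x'
        apply hbd 0
        intro j hj
        induction j using Fin.cases with
        | zero => exact absurd rfl hj
        | succ k => rw [← Fin.zero_succAbove k, hsymmsucc, hsymmsucc]
      -- interval containing values of x ↦ F (x, r)
      set S : Set ℝ := Set.range (fun x => F (x, r)) with hSdef
      have hSne : S.Nonempty := ⟨F (x₀, r), ⟨x₀, rfl⟩⟩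
      have hSbdd : BddBelow S := by
        refine ⟨F (x₀, r) - d, ?_⟩
        rintro y ⟨x, rfl⟩
        have := hpair x₀ x
        rw [abs_le] at this
        linarith [this.1]
      set a : ℝ := sInf S with hadef
      have hmem : ∀ x : Z, F (x, r) ∈ Set.Icc a (a + d) := by
        intro x
        constructor
        · exact csInf_le hSbdd ⟨x, rfl⟩
        · have : F (x, r) - d ≤ a := by
            apply le_csInf hSne
            rintro y ⟨x', rfl⟩
            have := hpair x x'
            rw [abs_le] at this
            linarith [this.1]
          linarith
      -- apply hoeffding to centered function
      have hcent : ∫ x, (F (x, r) - g r) ∂(ms 0) = 0 := by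
        rw [integral_sub (hFxint r) (integrable_const _)]
        simp [hgdef]
      have hH := hoeffding_lemma (ms 0) (fun x => F (x, r) - g r)
        ((hFmeas.comp measurable_prodMk_right).sub measurable_const)
        (a - g r) d hd
        (fun x => Set.mem_Icc.mpr
          ⟨by have hx := (hmem x).1
              show a - g r ≤ F (x, r) - g r
              linarith,
           by have hx := (hmem x).2
              show F (x, r) - g r ≤ a - g r + d
              linarith⟩)
        hcent t
      calc ∫ x, Real.exp (t * (F (x, r) - M)) ∂(ms 0)
          = ∫ x, Real.exp (t * (F (x, r) - g r)) * Real.exp (t * (g r - M)) ∂(ms 0) := by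
            congr 1; funext x; rw [← Real.exp_add]; congr 1; ring
        _ = (∫ x, Real.exp (t * (F (x, r) - g r)) ∂(ms 0)) * Real.exp (t * (g r - M)) :=
            integral_mul_const _ _
        _ ≤ Real.exp (t ^ 2 * d ^ 2 / 8) * Real.exp (t * (g r - M)) := by
            apply mul_le_mul_of_nonneg_right hH (le_of_lt (Real.exp_pos _))
    -- assemble
    have hexpF : Integrable (fun w => Real.exp (t * (F w - M)))
        ((ms 0).prod (Measure.pi ms')) := by
      apply integrable_of_bounded' (by fun_prop) (Real.exp (|t| * (2 * B)))
      intro w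
      rw [abs_of_pos (Real.exp_pos _)]
      apply Real.exp_le_exp.mpr
      calc t * (F w - M) ≤ |t * (F w - M)| := le_abs_self _
        _ = |t| * |F w - M| := abs_mul _ _
        _ ≤ |t| * (2 * B) := by
            apply mul_le_mul_of_nonneg_left _ (abs_nonneg t)
            calc |F w - M| ≤ |F w| + |M| := abs_sub _ _
              _ ≤ B + B := add_le_add (hFB w) hMB
              _ = 2 * B := by ring
    have hIH := ih ms' (fun j => hms _) g hgmeas hgbd hgB t
    rw [← hMg] at hIH
    calc ∫ z, Real.exp (t * (f z - M)) ∂(Measure.pi ms)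
        = ∫ w, Real.exp (t * (F w - M)) ∂((ms 0).prod (Measure.pi ms')) := by
          rw [← hmp.integral_comp e.measurableEmbedding]
          congr 1; funext z; simp [hFdef]
      _ = ∫ r, ∫ x, Real.exp (t * (F (x, r) - M)) ∂(ms 0) ∂(Measure.pi ms') :=
          integral_prod_symm _ hexpF
      _ ≤ ∫ r, Real.exp (t ^ 2 * d ^ 2 / 8) * Real.exp (t * (g r - M)) ∂(Measure.pi ms') := by
          apply integral_mono _ _ hinner
          · -- integrability of LHS
            apply integrable_of_bounded'
              (StronglyMeasurable.measurable
                ((by fun_prop : Measurable fun w => Real.exp (t * (F w - M))).stronglyMeasurable.integral_prod_left'))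
              (Real.exp (|t| * (2 * B)))
            intro r
            have := norm_integral_le_of_norm_le_const (μ := ms 0)
              (f := fun x => Real.exp (t * (F (x, r) - M))) (C := Real.exp (|t| * (2 * B)))
              (ae_of_all _ fun x => by
                rw [Real.norm_eq_abs, abs_of_pos (Real.exp_pos _)]
                apply Real.exp_le_exp.mpr
                calc t * (F (x, r) - M) ≤ |t * (F (x, r) - M)| := le_abs_self _
                  _ = |t| * |F (x, r) - M| := abs_mul _ _
                  _ ≤ |t| * (2 * B) := by
                      apply mul_le_mul_of_nonneg_left _ (abs_nonneg t)
                      calc |F (x, r) - M| ≤ |F (x, r)| + |M| := abs_sub _ _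
                        _ ≤ B + B := add_le_add (hFB _) hMB
                        _ = 2 * B := by ring)
            rw [Real.norm_eq_abs] at this
            rw [abs_le]
            constructor
            · have h0 : (0:ℝ) ≤ ∫ x, Real.exp (t * (F (x, r) - M)) ∂(ms 0) :=
                integral_nonneg (fun x => le_of_lt (Real.exp_pos _))
              have : (0:ℝ) < Real.exp (|t| * (2 * B)) := Real.exp_pos _
              linarith
            · have h2 := this
              simp only [measure_univ, probReal_univ, mul_one] at h2
              exact (abs_le.mp (by simpa [Real.norm_eq_abs] using h2 : |∫ x, Real.exp (t * (F (x, r) - M)) ∂(ms 0)| ≤ Real.exp (|t| * (2 * B)))).2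
          · apply Integrable.const_mul
            apply integrable_of_bounded' (by fun_prop) (Real.exp (|t| * (2 * B)))
            intro r
            rw [abs_of_pos (Real.exp_pos _)]
            apply Real.exp_le_exp.mpr
            calc t * (g r - M) ≤ |t * (g r - M)| := le_abs_self _
              _ = |t| * |g r - M| := abs_mul _ _
              _ ≤ |t| * (2 * B) := by
                  apply mul_le_mul_of_nonneg_left _ (abs_nonneg t)
                  calc |g r - M| ≤ |g r| + |M| := abs_sub _ _
                    _ ≤ B + B := add_le_add (hgB _) hMB
                    _ = 2 * B := by ring
      _ = Real.exp (t ^ 2 * d ^ 2 / 8) * ∫ r, Real.exp (t * (g r - M)) ∂(Measure.pi ms') :=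
          integral_const_mul _ _
      _ ≤ Real.exp (t ^ 2 * d ^ 2 / 8) * Real.exp (t ^ 2 * n * d ^ 2 / 8) :=
          mul_le_mul_of_nonneg_left hIH (le_of_lt (Real.exp_pos _))
      _ = Real.exp (t ^ 2 * (n + 1 : ℕ) * d ^ 2 / 8) := by
          rw [← Real.exp_add]
          congr 1
          push_cast
          ring

lemma bd_global {Z : Type*} (n : ℕ) (f : (Fin n → Z) → ℝ) (d : ℝ)
    (hbd : ∀ (i : Fin n) (z z' : Fin n → Z), (∀ j, j ≠ i → z j = z' j) → |f z - f z'| ≤ d)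
    (z z' : Fin n → Z) : |f z - f z'| ≤ n * d := by
  have key : ∀ k : ℕ, k ≤ n →
      |f z - f (fun i => if i.val < k then z' i else z i)| ≤ k * d := by
    intro k
    induction k with
    | zero => intro _; simp
    | succ k ih =>
      intro hk
      have hk' : k ≤ n := Nat.le_of_succ_le hk
      have hkn : k < n := hk
      have hstep : |f (fun i => if i.val < k then z' i else z i)
          - f (fun i => if i.val < k + 1 then z' i else z i)| ≤ d := by
        apply hbd ⟨k, hkn⟩
        intro j hj
        by_cases hjk : j.val < k
        · simp [hjk, Nat.lt_succ_of_lt hjk]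
        · have hjk1 : ¬ j.val < k + 1 := by
            intro hcon
            exact hj (Fin.ext (Nat.le_antisymm (Nat.lt_succ_iff.mp hcon) (Nat.not_lt.mp hjk)))
          simp [hjk, hjk1]
      calc |f z - f (fun i => if i.val < k + 1 then z' i else z i)|
          = |(f z - f (fun i => if i.val < k then z' i else z i))
            + (f (fun i => if i.val < k then z' i else z i)
              - f (fun i => if i.val < k + 1 then z' i else z i))| := by
            rw [sub_add_sub_cancel]
        _ ≤ _ + _ := abs_add_le _ _
        _ ≤ k * d + d := add_le_add (ih hk') hstep
        _ = (k + 1 : ℕ) * d := by push_cast; ring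
  have h := key n le_rfl
  have hw : (fun i : Fin n => if i.val < n then z' i else z i) = z' := by
    funext i; simp [i.isLt]
  rwa [hw] at h

lemma mcdiarmid_tail_one {Z : Type*} [MeasurableSpace Z] (n : ℕ) (hn : 0 < n)
    (ms : Fin n → Measure Z) (hms : ∀ i, IsProbabilityMeasure (ms i))
    (f : (Fin n → Z) → ℝ) (hf : Measurable f) (d : ℝ) (hd : 0 < d)
    (hbd : ∀ (i : Fin n) (z z' : Fin n → Z), (∀ j, j ≠ i → z j = z' j) → |f z - f z'| ≤ d)
    (B : ℝ) (hB : ∀ z, |f z| ≤ B) (ε : ℝ) (hε : 0 < ε) :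
    ((Measure.pi ms) {z | ε ≤ f z - ∫ y, f y ∂(Measure.pi ms)}).toReal
      ≤ Real.exp (-(2 * ε ^ 2) / (n * d ^ 2)) := by
  haveI := hms
  haveI : IsProbabilityMeasure (Measure.pi ms) := Measure.pi.instIsProbabilityMeasure ms
  set M : ℝ := ∫ y, f y ∂(Measure.pi ms) with hMdef
  have hnpos : (0:ℝ) < n := by exact_mod_cast hn
  set t : ℝ := 4 * ε / (n * d ^ 2) with htdef
  have ht : 0 < t := by positivity
  have hMB : |M| ≤ B := by
    have := norm_integral_le_of_norm_le_const (μ := Measure.pi ms) (f := f) (C := B)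
      (ae_of_all _ fun z => by simpa [Real.norm_eq_abs] using hB z)
    simpa [Real.norm_eq_abs, measure_univ] using this
  have hint : Integrable (fun z => Real.exp (t * (f z - M))) (Measure.pi ms) := by
    apply integrable_of_bounded' (by fun_prop) (Real.exp (|t| * (2 * B)))
    intro z
    rw [abs_of_pos (Real.exp_pos _)]
    apply Real.exp_le_exp.mpr
    calc t * (f z - M) ≤ |t * (f z - M)| := le_abs_self _
      _ = |t| * |f z - M| := abs_mul _ _
      _ ≤ |t| * (2 * B) := by
          apply mul_le_mul_of_nonneg_left _ (abs_nonneg t)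
          calc |f z - M| ≤ |f z| + |M| := abs_sub _ _
            _ ≤ B + B := add_le_add (hB z) hMB
            _ = 2 * B := by ring
  have hmarkov := mul_meas_ge_le_integral_of_nonneg
    (ae_of_all _ fun z => le_of_lt (Real.exp_pos (t * (f z - M)))) hint (Real.exp (t * ε))
  have hsub : {z | ε ≤ f z - M} ⊆ {z | Real.exp (t * ε) ≤ Real.exp (t * (f z - M))} := by
    intro z hz
    exact Real.exp_le_exp.mpr (mul_le_mul_of_nonneg_left hz (le_of_lt ht))
  have hmono : ((Measure.pi ms) {z | ε ≤ f z - M}).toReal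
      ≤ ((Measure.pi ms) {z | Real.exp (t * ε) ≤ Real.exp (t * (f z - M))}).toReal := by
    apply ENNReal.toReal_mono (measure_ne_top _ _)
    exact measure_mono hsub
  have hmgf := mcdiarmid_mgf d (le_of_lt hd) B n ms hms f hf hbd hB t
  rw [← hMdef] at hmgf
  have hchain : Real.exp (t * ε) * ((Measure.pi ms) {z | ε ≤ f z - M}).toReal
      ≤ Real.exp (t ^ 2 * n * d ^ 2 / 8) := by
    calc Real.exp (t * ε) * ((Measure.pi ms) {z | ε ≤ f z - M}).toReal
        ≤ Real.exp (t * ε) *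
          ((Measure.pi ms) {z | Real.exp (t * ε) ≤ Real.exp (t * (f z - M))}).toReal :=
          mul_le_mul_of_nonneg_left hmono (le_of_lt (Real.exp_pos _))
      _ ≤ ∫ z, Real.exp (t * (f z - M)) ∂(Measure.pi ms) := hmarkov
      _ ≤ Real.exp (t ^ 2 * n * d ^ 2 / 8) := hmgf
  have hfinal : ((Measure.pi ms) {z | ε ≤ f z - M}).toReal
      ≤ Real.exp (t ^ 2 * n * d ^ 2 / 8 - t * ε) := by
    rw [Real.exp_sub]
    rw [le_div_iff₀ (Real.exp_pos _)]
    calc ((Measure.pi ms) {z | ε ≤ f z - M}).toReal * Real.exp (t * ε)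
        = Real.exp (t * ε) * ((Measure.pi ms) {z | ε ≤ f z - M}).toReal := by ring
      _ ≤ _ := hchain
  have harith : t ^ 2 * n * d ^ 2 / 8 - t * ε = -(2 * ε ^ 2) / (n * d ^ 2) := by
    rw [htdef]
    field_simp
    ring
  rwa [harith] at hfinal

lemma mcdiarmid_tail_two {Z : Type*} [MeasurableSpace Z] (n : ℕ) (hn : 0 < n)
    (ms : Fin n → Measure Z) (hms : ∀ i, IsProbabilityMeasure (ms i))
    (f : (Fin n → Z) → ℝ) (hf : Measurable f) (d : ℝ) (hd : 0 < d)
    (hbd : ∀ (i : Fin n) (z z' : Fin n → Z), (∀ j, j ≠ i → z j = z' j) → |f z - f z'| ≤ d)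
    (B : ℝ) (hB : ∀ z, |f z| ≤ B) (ε : ℝ) (hε : 0 < ε) :
    ((Measure.pi ms) {z | ε ≤ |f z - ∫ y, f y ∂(Measure.pi ms)|}).toReal
      ≤ 2 * Real.exp (-(2 * ε ^ 2) / (n * d ^ 2)) := by
  haveI := hms
  haveI : IsProbabilityMeasure (Measure.pi ms) := Measure.pi.instIsProbabilityMeasure ms
  set M : ℝ := ∫ y, f y ∂(Measure.pi ms) with hMdef
  have h1 := mcdiarmid_tail_one n hn ms hms f hf d hd hbd B hB ε hε
  have h2 := mcdiarmid_tail_one n hn ms hms (fun z => -f z) (hf.neg) d hd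
    (fun i z z' hzz => by
      have := hbd i z z' hzz
      rw [show -f z - -f z' = -(f z - f z') by ring, abs_neg]
      exact this)
    B (fun z => by rw [abs_neg]; exact hB z) ε hε
  have hnegint : ∫ y, -f y ∂(Measure.pi ms) = -M := by
    rw [hMdef, integral_neg]
  rw [hnegint] at h2
  have hsub : {z | ε ≤ |f z - M|} ⊆ {z | ε ≤ f z - M} ∪ {z | ε ≤ -f z - -M} := by
    intro z hz
    rw [Set.mem_setOf_eq, le_abs] at hz
    rcases hz with h | h
    · left; exact h
    · right; show ε ≤ -f z - -M; linarith
  calc ((Measure.pi ms) {z | ε ≤ |f z - M|}).toReal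
      ≤ ((Measure.pi ms) ({z | ε ≤ f z - M} ∪ {z | ε ≤ -f z - -M})).toReal := by
        apply ENNReal.toReal_mono (measure_ne_top _ _)
        exact measure_mono hsub
    _ ≤ (((Measure.pi ms) {z | ε ≤ f z - M}) + ((Measure.pi ms) {z | ε ≤ -f z - -M})).toReal := by
        apply ENNReal.toReal_mono
        · exact ENNReal.add_ne_top.mpr ⟨measure_ne_top _ _, measure_ne_top _ _⟩
        · exact measure_union_le _ _
    _ = ((Measure.pi ms) {z | ε ≤ f z - M}).toReal
        + ((Measure.pi ms) {z | ε ≤ -f z - -M}).toReal :=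
        ENNReal.toReal_add (measure_ne_top _ _) (measure_ne_top _ _)
    _ ≤ Real.exp (-(2 * ε ^ 2) / (n * d ^ 2)) + Real.exp (-(2 * ε ^ 2) / (n * d ^ 2)) :=
        add_le_add h1 h2
    _ = 2 * Real.exp (-(2 * ε ^ 2) / (n * d ^ 2)) := by ring

/-- Lemma 3 (concentration of the fitted predictor around the mean-parameter
predictor): under uniform stability with constant `c_n` and a bi-Lipschitz
parametrization, `P(‖μ_{β̂ₙ} − μ_{β̄ₙ}‖_∞ ≥ ε) ≤ 2p exp(−2κ₁²ε²/(n κ₂² c_n²))`. -/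
theorem stmt3 {Ω : Type*} [MeasureSpace Ω] [IsProbabilityMeasure (ℙ : Measure Ω)]
    {Z : Type*} [MeasurableSpace Z] {X : Type*} [TopologicalSpace X]
    (n p : ℕ) (hn : 0 < n) (hp : 0 < p)
    (c κ₁ κ₂ : ℝ) (hc : 0 < c) (hκ₁ : 0 < κ₁) (hκ₂ : 0 < κ₂)
    (μ : (Fin p → ℝ) → (X →ᵇ ℝ))
    (T : (Fin n → Z) → (Fin p → ℝ)) (hT : Measurable T)
    (hstab : ∀ (i : Fin n) (z z' : Fin n → Z), (∀ j, j ≠ i → z j = z' j) →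
      ‖μ (T z) - μ (T z')‖ ≤ c)
    (hbilip : ∀ β β' : Fin p → ℝ,
      κ₁ * ‖β - β'‖ ≤ ‖μ β - μ β'‖ ∧ ‖μ β - μ β'‖ ≤ κ₂ * ‖β - β'‖)
    (Zs : Fin n → Ω → Z) (hmeas : ∀ i, Measurable (Zs i))
    (hindep : iIndepFun Zs ℙ)
    (hident : ∀ i, Measure.map (Zs i) ℙ = Measure.map (Zs ⟨0, hn⟩) ℙ)
    (ε : ℝ) (hε : 0 < ε) :
    (ℙ {ω | ε ≤ ‖μ (T (fun i => Zs i ω)) -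
        μ (fun j => ∫ ω', T (fun i => Zs i ω') j ∂ℙ)‖}).toReal
      ≤ 2 * p * Real.exp (-(2 * κ₁ ^ 2 * ε ^ 2) / (n * κ₂ ^ 2 * c ^ 2)) := by
  set d : ℝ := c / κ₁ with hddef
  have hdpos : 0 < d := by positivity
  set m : Fin n → Measure Z := fun i => Measure.map (Zs i) ℙ with hmdef
  have hmprob : ∀ i, IsProbabilityMeasure (m i) := fun i =>
    Measure.isProbabilityMeasure_map (hmeas i).aemeasurable
  haveI := hmprob
  set φ : Ω → (Fin n → Z) := fun ω i => Zs i ω with hφdef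
  have hφmeas : Measurable φ := measurable_pi_iff.mpr hmeas
  have hmap : Measure.pi m = Measure.map φ ℙ := by
    apply Measure.pi_eq
    intro s hs
    rw [Measure.map_apply hφmeas (MeasurableSet.univ_pi hs)]
    have hpre : φ ⁻¹' (Set.univ.pi s) = ⋂ i ∈ Finset.univ, Zs i ⁻¹' (s i) := by
      ext ω
      simp [hφdef, Set.mem_pi]
    rw [hpre, hindep.measure_inter_preimage_eq_mul Finset.univ (fun i _ => hs i)]
    apply Finset.prod_congr rfl
    intro i _
    rw [Measure.map_apply (hmeas i) (hs i)]
  set βbar : Fin p → ℝ := fun j => ∫ ω', T (fun i => Zs i ω') j ∂ℙ with hβdef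
  have hfmeas : ∀ j : Fin p, Measurable (fun z => T z j) := fun j =>
    (measurable_pi_apply j).comp hT
  -- bounded differences of each coordinate of T
  have hbdj : ∀ (j : Fin p) (i : Fin n) (z z' : Fin n → Z),
      (∀ k, k ≠ i → z k = z' k) → |T z j - T z' j| ≤ d := by
    intro j i z z' hzz
    have h1 := hstab i z z' hzz
    have h2 := (hbilip (T z) (T z')).1
    have hnorm : ‖T z - T z'‖ ≤ d := by
      rw [hddef, le_div_iff₀ hκ₁]
      calc ‖T z - T z'‖ * κ₁ = κ₁ * ‖T z - T z'‖ := by ring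
        _ ≤ ‖μ (T z) - μ (T z')‖ := h2
        _ ≤ c := h1
    calc |T z j - T z' j| = ‖(T z - T z') j‖ := by rw [Pi.sub_apply, Real.norm_eq_abs]
      _ ≤ ‖T z - T z'‖ := norm_le_pi_norm _ j
      _ ≤ d := hnorm
  -- global bound
  haveI : NeZero (ℙ : Measure Ω) := ⟨IsProbabilityMeasure.ne_zero ℙ⟩
  obtain ⟨ω₀⟩ : Nonempty Ω := Measure.nonempty_of_neZero (ℙ : Measure Ω)
  set z₀ : Fin n → Z := fun i => Zs i ω₀ with hz₀def
  have hBj : ∀ (j : Fin p) (z : Fin n → Z), |T z j| ≤ |T z₀ j| + n * d := by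
    intro j z
    have h := bd_global n (fun z => T z j) d (hbdj j) z z₀
    calc |T z j| = |(T z j - T z₀ j) + T z₀ j| := by ring_nf
      _ ≤ |T z j - T z₀ j| + |T z₀ j| := abs_add_le _ _
      _ ≤ n * d + |T z₀ j| := by linarith
      _ = |T z₀ j| + n * d := by ring
  have hβalt : ∀ j, βbar j = ∫ z, T z j ∂(Measure.pi m) := by
    intro j
    rw [hmap, integral_map hφmeas.aemeasurable (hfmeas j).aestronglyMeasurable]
  set ε' : ℝ := ε / κ₂ with hε'def
  have hε' : 0 < ε' := by positivity
  -- event inclusion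
  have hincl : {ω | ε ≤ ‖μ (T (φ ω)) - μ βbar‖}
      ⊆ ⋃ j : Fin p, {ω | ε' ≤ |T (φ ω) j - βbar j|} := by
    intro ω hω
    rw [Set.mem_setOf_eq] at hω
    by_contra hcon
    simp only [Set.mem_iUnion, Set.mem_setOf_eq, not_exists, not_le] at hcon
    have hup := (hbilip (T (φ ω)) βbar).2
    have hκnorm : ε ≤ κ₂ * ‖T (φ ω) - βbar‖ := le_trans hω hup
    have hnorm : ε' ≤ ‖T (φ ω) - βbar‖ := by
      rw [hε'def, div_le_iff₀ hκ₂]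
      calc ε ≤ κ₂ * ‖T (φ ω) - βbar‖ := hκnorm
        _ = ‖T (φ ω) - βbar‖ * κ₂ := by ring
    have hlt : ‖T (φ ω) - βbar‖ < ε' := by
      rw [pi_norm_lt_iff hε']
      intro j
      rw [Pi.sub_apply, Real.norm_eq_abs]
      exact hcon j
    linarith
  -- per-coordinate bound
  have hperj : ∀ j : Fin p, (ℙ {ω | ε' ≤ |T (φ ω) j - βbar j|}).toReal
      ≤ 2 * Real.exp (-(2 * κ₁ ^ 2 * ε ^ 2) / (n * κ₂ ^ 2 * c ^ 2)) := by
    intro j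
    have hsetmeas : MeasurableSet {z : Fin n → Z | ε' ≤ |T z j - βbar j|} :=
      measurableSet_le measurable_const ((hfmeas j).sub measurable_const).abs
    have hpre : ℙ {ω | ε' ≤ |T (φ ω) j - βbar j|}
        = (Measure.pi m) {z | ε' ≤ |T z j - βbar j|} := by
      rw [hmap, Measure.map_apply hφmeas hsetmeas]
      rfl
    rw [hpre]
    have htail := mcdiarmid_tail_two n hn m hmprob (fun z => T z j) (hfmeas j) d hdpos
      (hbdj j) (|T z₀ j| + n * d) (hBj j) ε' hε'
    rw [← hβalt j] at htail
    have harith : -(2 * ε' ^ 2) / (n * d ^ 2) = -(2 * κ₁ ^ 2 * ε ^ 2) / (n * κ₂ ^ 2 * c ^ 2) := by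
      have hnpos : (0:ℝ) < n := by exact_mod_cast hn
      rw [hε'def, hddef]
      field_simp
    rw [harith] at htail
    exact htail
  -- union bound
  have hgoal : (ℙ {ω | ε ≤ ‖μ (T (φ ω)) - μ βbar‖}).toReal
      ≤ 2 * p * Real.exp (-(2 * κ₁ ^ 2 * ε ^ 2) / (n * κ₂ ^ 2 * c ^ 2)) := by
    calc (ℙ {ω | ε ≤ ‖μ (T (φ ω)) - μ βbar‖}).toReal
        ≤ (∑ j : Fin p, ℙ {ω | ε' ≤ |T (φ ω) j - βbar j|}).toReal := by
          apply ENNReal.toReal_mono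
          · exact ENNReal.sum_ne_top.mpr (fun j _ => measure_ne_top _ _)
          · exact le_trans (measure_mono hincl) (measure_iUnion_fintype_le _ _)
      _ = ∑ j : Fin p, (ℙ {ω | ε' ≤ |T (φ ω) j - βbar j|}).toReal :=
          ENNReal.toReal_sum (fun j _ => measure_ne_top _ _)
      _ ≤ ∑ j : Fin p, 2 * Real.exp (-(2 * κ₁ ^ 2 * ε ^ 2) / (n * κ₂ ^ 2 * c ^ 2)) :=
          Finset.sum_le_sum (fun j _ => hperj j)
      _ = 2 * p * Real.exp (-(2 * κ₁ ^ 2 * ε ^ 2) / (n * κ₂ ^ 2 * c ^ 2)) := by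
          rw [Finset.sum_const, Finset.card_univ, Fintype.card_fin]
          simp [nsmul_eq_mul]
          ring
  exact hgoal
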